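/- If the pair (A,B) is reachable, then the reachability Gramian 𝒢 = ∑_{k=0}^∞ Aᵏ B B* (A*)ᵏ is positive definite; in particular 𝒢 is invertible. -/

import Mathlib

open Matrix Filter Topology
open scoped ComplexOrder

section frob

attribute [local instance] Matrix.frobeniusNormedAddCommGroup Matrix.frobeniusNormedRing
  Matrix.frobeniusNormedAlgebra

private lemma frob_entry_le {m l : ℕ} (M : Matrix (Fin m) (Fin l) ℂ) (i : Fin m) (j : Fin l) :
    ‖M i j‖₊ ≤ ‖M‖₊ := by
  rw [Matrix.frobenius_nnnorm_def]
  have h1 : ‖M i j‖₊ = (‖M i j‖₊ ^ (2:ℝ)) ^ (1/2:ℝ) := by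
    rw [← NNReal.rpow_mul]; norm_num
  rw [h1]
  refine NNReal.rpow_le_rpow ?_ (by norm_num)
  calc ‖M i j‖₊ ^ (2:ℝ) ≤ ∑ j', ‖M i j'‖₊ ^ (2:ℝ) :=
        Finset.single_le_sum (f := fun j' => ‖M i j'‖₊ ^ (2:ℝ))
          (fun _ _ => zero_le) (Finset.mem_univ j)
    _ ≤ ∑ i', ∑ j', ‖M i' j'‖₊ ^ (2:ℝ) :=
        Finset.single_le_sum (f := fun i' => ∑ j', ‖M i' j'‖₊ ^ (2:ℝ))
          (fun _ _ => zero_le) (Finset.mem_univ i)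

private lemma gramian_entry_summable {n : ℕ} (A : Matrix (Fin n) (Fin n) ℂ)
    (B : Matrix (Fin n) (Fin 1) ℂ) (hA : ∀ μ ∈ spectrum ℂ A, ‖μ‖ < 1) (i j : Fin n) :
    Summable (fun k : ℕ => (A ^ k * B * Bᴴ * (Aᴴ) ^ k) i j) := by
  obtain ⟨c, hc1, hc⟩ : ∃ c : NNReal, c < 1 ∧ ∀ μ ∈ spectrum ℂ A, ‖μ‖₊ ≤ c := by
    rcases (spectrum ℂ A).eq_empty_or_nonempty with h | h
    · exact ⟨0, zero_lt_one, by simp [h]⟩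
    · have himg : ((fun μ : ℂ => ‖μ‖₊) '' spectrum ℂ A).Finite := (A.finite_spectrum).image _
      have hne : ((fun μ : ℂ => ‖μ‖₊) '' spectrum ℂ A).Nonempty := h.image _
      obtain ⟨μ₀, hμ₀, hμ₀eq⟩ := hne.csSup_mem himg
      refine ⟨_, ?_, fun μ hμ => le_csSup himg.bddAbove ⟨μ, hμ, rfl⟩⟩
      rw [← hμ₀eq]
      exact_mod_cast hA μ₀ hμ₀
  have hρ : spectralRadius ℂ A < 1 := by
    have h1 : spectralRadius ℂ A ≤ (c : ENNReal) :=
      iSup₂_le fun μ hμ => ENNReal.coe_le_coe.mpr (hc μ hμ)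
    exact h1.trans_lt (by exact_mod_cast hc1)
  obtain ⟨r, hρr, hr1⟩ := ENNReal.lt_iff_exists_nnreal_btwn.mp hρ
  have hr1' : (r : ℝ) < 1 := by exact_mod_cast hr1
  have hgel := spectrum.pow_nnnorm_pow_one_div_tendsto_nhds_spectralRadius A
  have hev : ∀ᶠ k : ℕ in atTop, (‖A ^ k‖₊ : ENNReal) ^ (1/(k:ℝ)) < r :=
    hgel.eventually_lt_const hρr
  have hbound : ∀ᶠ k in atTop, ‖A ^ k‖ ≤ (r : ℝ) ^ k := by
    filter_upwards [hev, eventually_ge_atTop 1] with k hk hk1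
    have hk0 : (k:ℝ) ≠ 0 := by positivity
    have h2 := ENNReal.rpow_lt_rpow hk (by positivity : (0:ℝ) < (k:ℝ))
    rw [← ENNReal.rpow_mul, one_div, inv_mul_cancel₀ hk0, ENNReal.rpow_one,
      ENNReal.rpow_natCast, ← ENNReal.coe_pow, ENNReal.coe_lt_coe] at h2
    exact_mod_cast h2.le
  refine Summable.of_norm_bounded_eventually_nat
    (g := fun k => (‖B‖ * ‖Bᴴ‖) * (((r:ℝ)) * (r:ℝ)) ^ k)
    (Summable.mul_left _ (summable_geometric_of_lt_one (r := (r:ℝ) * (r:ℝ)) (by positivity)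
      (by nlinarith [NNReal.coe_nonneg r]))) ?_
  filter_upwards [hbound] with k hk
  have hAk : ‖(Aᴴ : Matrix (Fin n) (Fin n) ℂ) ^ k‖ = ‖A ^ k‖ := by
    rw [← Matrix.conjTranspose_pow, Matrix.frobenius_norm_conjTranspose]
  have he : ‖(A ^ k * B * Bᴴ * (Aᴴ) ^ k) i j‖ ≤ ‖A ^ k * B * Bᴴ * (Aᴴ) ^ k‖ :=
    frob_entry_le _ i j
  have h3 : ‖A ^ k * B * Bᴴ * (Aᴴ) ^ k‖ ≤ ‖A ^ k * B * Bᴴ‖ * ‖(Aᴴ) ^ k‖ :=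
    Matrix.frobenius_norm_mul _ _
  have h4 : ‖A ^ k * B * Bᴴ‖ ≤ ‖A ^ k * B‖ * ‖Bᴴ‖ := Matrix.frobenius_norm_mul _ _
  have h5 : ‖A ^ k * B‖ ≤ ‖A ^ k‖ * ‖B‖ := Matrix.frobenius_norm_mul _ _
  have hm : ‖A ^ k * B * Bᴴ * (Aᴴ) ^ k‖ ≤ ‖A ^ k‖ * ‖B‖ * ‖Bᴴ‖ * ‖A ^ k‖ := by
    rw [hAk] at h3
    calc ‖A ^ k * B * Bᴴ * (Aᴴ) ^ k‖ ≤ ‖A ^ k * B * Bᴴ‖ * ‖A ^ k‖ := h3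
      _ ≤ (‖A ^ k * B‖ * ‖Bᴴ‖) * ‖A ^ k‖ :=
          mul_le_mul_of_nonneg_right h4 (norm_nonneg _)
      _ ≤ ((‖A ^ k‖ * ‖B‖) * ‖Bᴴ‖) * ‖A ^ k‖ :=
          mul_le_mul_of_nonneg_right (mul_le_mul_of_nonneg_right h5 (norm_nonneg _))
            (norm_nonneg _)
  have hrk : (0:ℝ) ≤ (r:ℝ) ^ k := by positivity
  calc ‖(A ^ k * B * Bᴴ * (Aᴴ) ^ k) i j‖ ≤ ‖A ^ k‖ * ‖B‖ * ‖Bᴴ‖ * ‖A ^ k‖ := he.trans hm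
    _ ≤ (r:ℝ) ^ k * ‖B‖ * ‖Bᴴ‖ * ‖A ^ k‖ :=
        mul_le_mul_of_nonneg_right (mul_le_mul_of_nonneg_right
          (mul_le_mul_of_nonneg_right hk (norm_nonneg _)) (norm_nonneg _)) (norm_nonneg _)
    _ ≤ (r:ℝ) ^ k * ‖B‖ * ‖Bᴴ‖ * ((r:ℝ) ^ k) := by
        refine mul_le_mul_of_nonneg_left hk ?_
        positivity
    _ = (‖B‖ * ‖Bᴴ‖) * (((r:ℝ)) * (r:ℝ)) ^ k := by rw [mul_pow]; ring

end frob

/-- If the pair `(A,B)` is reachable (the controllability matrix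
`Γ = [B, AB, …, A^{n−1}B]` is invertible), then the reachability Gramian
`𝒢 = ∑_{k=0}^∞ Aᵏ B B* (A*)ᵏ` is positive definite; in particular it is invertible. -/
theorem gramian_posDef_of_reachable
    {n : ℕ} (hn : 1 ≤ n)
    (A : Matrix (Fin n) (Fin n) ℂ) (B : Matrix (Fin n) (Fin 1) ℂ)
    (hA : ∀ μ ∈ spectrum ℂ A, ‖μ‖ < 1)
    (hreach : IsUnit (Matrix.of fun (i : Fin n) (j : Fin n) => (A ^ (j : ℕ) * B) i 0)) :
    (∑' k : ℕ, A ^ k * B * Bᴴ * (Aᴴ) ^ k).PosDef ∧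
      IsUnit (∑' k : ℕ, A ^ k * B * Bᴴ * (Aᴴ) ^ k) := by
  set f : ℕ → Matrix (Fin n) (Fin n) ℂ := fun k => A ^ k * B * Bᴴ * (Aᴴ) ^ k with hf
  have hentry : ∀ i j, Summable fun k => f k i j := fun i j =>
    gramian_entry_summable A B hA i j
  have hrow : ∀ i, Summable fun k => f k i := fun i => Pi.summable.mpr (hentry i)
  have hsum : Summable f := Pi.summable.mpr hrow
  have hGapp : ∀ i j, (∑' k, f k) i j = ∑' k, f k i j := fun i j => by
    exact (congrFun (tsum_apply (x := i) hsum) j).trans (tsum_apply (x := j) (hrow i))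
  have hM : ∀ k, f k = (A ^ k * B) * (A ^ k * B)ᴴ := by
    intro k
    show A ^ k * B * Bᴴ * (Aᴴ) ^ k = (A ^ k * B) * (A ^ k * B)ᴴ
    rw [Matrix.conjTranspose_mul, Matrix.conjTranspose_pow]
    exact Matrix.mul_assoc (A ^ k * B) Bᴴ ((Aᴴ) ^ k)
  have hfh : ∀ k, (f k).IsHermitian := fun k =>
    (hM k) ▸ Matrix.isHermitian_mul_conjTranspose_self _
  have hGh : (∑' k, f k).IsHermitian := by
    show (∑' k, f k)ᴴ = ∑' k, f k
    ext i j
    rw [Matrix.conjTranspose_apply, hGapp, hGapp, tsum_star]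
    refine tsum_congr fun k => ?_
    have h1 := congrFun (congrFun (hfh k) i) j
    rwa [Matrix.conjTranspose_apply] at h1
  have key : ∀ x : Fin n → ℂ, x ≠ 0 → 0 < star x ⬝ᵥ ((∑' k, f k) *ᵥ x) := by
    intro x hx
    let φ : Matrix (Fin n) (Fin n) ℂ →ₗ[ℂ] ℂ :=
      { toFun := fun M => star x ⬝ᵥ (M *ᵥ x)
        map_add' := fun M N => by simp [Matrix.add_mulVec, dotProduct_add]
        map_smul' := fun c M => by simp [Matrix.smul_mulVec] }
    let Φ : Matrix (Fin n) (Fin n) ℂ →L[ℂ] ℂ := ⟨φ, φ.continuous_of_finiteDimensional⟩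
    have hφ : star x ⬝ᵥ ((∑' k, f k) *ᵥ x) = ∑' k, star x ⬝ᵥ (f k *ᵥ x) :=
      Φ.map_tsum hsum
    have hφsum : Summable fun k => star x ⬝ᵥ (f k *ᵥ x) :=
      hsum.map Φ Φ.continuous
    set q : ℕ → ℝ := fun k => ∑ i : Fin 1, Complex.normSq (((A ^ k * B)ᴴ *ᵥ x) i) with hq
    have hqc : ∀ k, star x ⬝ᵥ (f k *ᵥ x) = ((q k : ℝ) : ℂ) := by
      intro k
      rw [hM k, ← Matrix.mulVec_mulVec, Matrix.dotProduct_mulVec]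
      have hstar : star x ᵥ* (A ^ k * B) = star ((A ^ k * B)ᴴ *ᵥ x) := by
        rw [Matrix.star_mulVec, Matrix.conjTranspose_conjTranspose]
      rw [hstar]
      simp only [dotProduct, Pi.star_apply, hq, Complex.ofReal_sum]
      exact Finset.sum_congr rfl fun i _ => (Complex.normSq_eq_conj_mul_self).symm
    have hqsum : Summable q := by
      have h := hφsum.map Complex.reCLM Complex.reCLM.continuous
      exact h.congr fun k => by simp [Function.comp, hqc k]
    have hq0 : ∀ k, 0 ≤ q k := fun k =>
      Finset.sum_nonneg fun i _ => Complex.normSq_nonneg _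
    have hy : ∀ k : ℕ, q k = 0 → ((A ^ k * B)ᴴ *ᵥ x) = 0 := by
      intro k hk
      funext i
      have h2 := (Finset.sum_eq_zero_iff_of_nonneg
        (fun i _ => Complex.normSq_nonneg (((A ^ k * B)ᴴ *ᵥ x) i))).mp hk i (Finset.mem_univ i)
      exact Complex.normSq_eq_zero.mp h2
    have hex : ∃ k, q k ≠ 0 := by
      by_contra h
      push_neg at h
      apply hx
      set Γ : Matrix (Fin n) (Fin n) ℂ :=
        Matrix.of fun (i : Fin n) (j : Fin n) => (A ^ (j : ℕ) * B) i 0 with hΓdef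
      have hΓH : IsUnit Γᴴ := by
        rw [Matrix.isUnit_iff_isUnit_det, Matrix.det_conjTranspose]
        exact ((Matrix.isUnit_iff_isUnit_det Γ).mp hreach).star
      have hinj := Matrix.mulVec_injective_iff_isUnit.mpr hΓH
      have hΓx : Γᴴ *ᵥ x = 0 := by
        funext j
        have h3 : (Γᴴ *ᵥ x) j = ((A ^ (j : ℕ) * B)ᴴ *ᵥ x) 0 := by
          simp [Matrix.mulVec, dotProduct, Matrix.conjTranspose_apply, hΓdef]
        rw [h3, hy (j : ℕ) (h (j : ℕ))]
        rfl
      have h0 : Γᴴ *ᵥ x = Γᴴ *ᵥ 0 := by rw [hΓx, Matrix.mulVec_zero]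
      exact hinj h0
    obtain ⟨k₀, hk₀⟩ := hex
    have hpos : 0 < ∑' k, q k :=
      Summable.tsum_pos hqsum hq0 k₀ (lt_of_le_of_ne (hq0 k₀) (Ne.symm hk₀))
    rw [hφ]
    have h4 : (∑' k, star x ⬝ᵥ (f k *ᵥ x)) = ((∑' k, q k : ℝ) : ℂ) := by
      rw [tsum_congr hqc]
      exact (Complex.ofRealCLM.map_tsum hqsum).symm
    rw [h4]
    exact_mod_cast hpos
  have hPD : (∑' k, f k).PosDef := Matrix.PosDef.of_dotProduct_mulVec_pos hGh key
  exact ⟨hPD, hPD.isUnit⟩
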